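/- arXiv:2601.18185 — 3 statements merged into one kernel-verified Lean document; each statement's English description precedes it below -/
import Mathlib

section
/- Let G be a countable group acting on a countable set V such that all point stabilizers are finite and the action has finitely many orbits. Then there exist functions |·|_G : G → ℝ_{≥0} and |·|_V : V → ℝ_{≥0} such that: (1) |gg'|_G ≤ |g|_G + |g'|_G for all g, g' ∈ G; (2) |g·v|_V ≤ |g|_G + |v|_V for all g ∈ G, v ∈ V; (3) for every n ∈ ℕ, the sets {g ∈ G : |g|_G ≤ n} and {v ∈ V : |v|_V ≤ n} are finite. -/
/-- For a countable group acting on a countable set with finite point stabilizers and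
finitely many orbits, there exist compatible proper length functions on the group and
on the set. -/
theorem stmt4 {G : Type*} [Group G] [Countable G] {V : Type*} [Countable V]
    [MulAction G V]
    (hstab : ∀ v : V, {g : G | g • v = v}.Finite)
    (horb : Finite (Quotient (MulAction.orbitRel G V))) :
    ∃ (ℓG : G → ℝ) (ℓV : V → ℝ),
      (∀ g, 0 ≤ ℓG g) ∧ (∀ v, 0 ≤ ℓV v) ∧
      (∀ g g' : G, ℓG (g * g') ≤ ℓG g + ℓG g') ∧
      (∀ (g : G) (v : V), ℓV (g • v) ≤ ℓG g + ℓV v) ∧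
      (∀ n : ℕ, {g : G | ℓG g ≤ n}.Finite ∧ {v : V | ℓV v ≤ n}.Finite) := by
  obtain ⟨e, he⟩ := Countable.exists_injective_nat G
  -- weight function
  set W : G → ℕ := fun g => e g + 1 with hW
  -- sets of word weights
  set S : G → Set ℕ := fun g => {n | ∃ l : List G, l.prod = g ∧ (l.map W).sum = n} with hS
  have hSne : ∀ g, (S g).Nonempty := fun g => ⟨W g, [g], by simp⟩
  set ℓ : G → ℕ := fun g => sInf (S g) with hℓ
  have hmem : ∀ g, ℓ g ∈ S g := fun g => Nat.sInf_mem (hSne g)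
  -- subadditivity of ℓ
  have hsub : ∀ g g' : G, ℓ (g * g') ≤ ℓ g + ℓ g' := by
    intro g g'
    obtain ⟨l, hl, hls⟩ := hmem g
    obtain ⟨l', hl', hls'⟩ := hmem g'
    exact Nat.sInf_le ⟨l ++ l', by simp [hl, hl'], by simp [hls, hls']⟩
  -- properness of ℓ
  have hproper : ∀ n : ℕ, {g : G | ℓ g ≤ n}.Finite := by
    intro n
    have hF : {s : G | W s ≤ n}.Finite := by
      have : {s : G | W s ≤ n} ⊆ e ⁻¹' {m | m ≤ n} := by
        intro s hs
        exact Nat.le_of_succ_le hs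
      exact Set.Finite.subset ((Set.finite_Iic n).preimage he.injOn) this
    have : Finite ↥(hF.toFinset : Set G) := by
      simp only [Set.Finite.coe_toFinset]
      exact hF
    have hlists : {l : List ↥(hF.toFinset : Set G) | l.length ≤ n}.Finite :=
      List.finite_length_le _ n
    have hsub2 : {g : G | ℓ g ≤ n} ⊆
        (fun l : List ↥(hF.toFinset : Set G) => (l.map Subtype.val).prod) ''
          {l | l.length ≤ n} := by
      intro g hg
      obtain ⟨l, hl, hls⟩ := hmem g
      have hgn : (l.map W).sum ≤ n := hls.trans_le hg
      have hmemF : ∀ s ∈ l, s ∈ (hF.toFinset : Set G) := by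
        intro s hs
        have : W s ≤ (l.map W).sum :=
          List.single_le_sum (fun _ _ => Nat.zero_le _) _ (List.mem_map_of_mem (f := W) hs)
        simp only [Set.Finite.coe_toFinset, Set.mem_setOf_eq]
        omega
      have hlen : l.length ≤ n := by
        have : l.length ≤ (l.map W).sum := by
          have := List.length_le_sum_of_one_le (l.map W) (by
            intro i hi
            obtain ⟨s, _, rfl⟩ := List.mem_map.mp hi
            simp [hW])
          simpa using this
        omega
      refine ⟨l.attach.map (fun x => ⟨x.1, hmemF x.1 x.2⟩), by simpa using hlen, ?_⟩
      simp [List.map_map, Function.comp_def, hl]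
    exact (hlists.image _).subset hsub2
  -- the length on V
  set rep : V → V := fun v => (Quotient.mk (MulAction.orbitRel G V) v).out with hrep
  have hrep_orbit : ∀ v : V, ∃ g : G, g • rep v = v := by
    intro v
    have h1 : (Quotient.mk (MulAction.orbitRel G V) (rep v)) =
        Quotient.mk (MulAction.orbitRel G V) v := Quotient.out_eq _
    have h2 : rep v ∈ MulAction.orbit G v := Quotient.exact h1
    obtain ⟨g, hg⟩ := h2
    exact ⟨g⁻¹, by rw [← hg]; simp⟩
  set SV : V → Set ℕ := fun v => {n | ∃ g : G, g • rep v = v ∧ ℓ g = n} with hSV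
  have hSVne : ∀ v, (SV v).Nonempty := by
    intro v
    obtain ⟨g, hg⟩ := hrep_orbit v
    exact ⟨ℓ g, g, hg, rfl⟩
  set ℓV : V → ℕ := fun v => sInf (SV v) with hℓV
  have hmemV : ∀ v, ℓV v ∈ SV v := fun v => Nat.sInf_mem (hSVne v)
  have hrep_smul : ∀ (g : G) (v : V), rep (g • v) = rep v := by
    intro g v
    have : Quotient.mk (MulAction.orbitRel G V) (g • v) =
        Quotient.mk (MulAction.orbitRel G V) v :=
      Quotient.sound (MulAction.orbitRel_apply.mpr ⟨g, rfl⟩)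
    simp only [hrep, this]
  have hcompat : ∀ (g : G) (v : V), ℓV (g • v) ≤ ℓ g + ℓV v := by
    intro g v
    obtain ⟨h, hh, hhl⟩ := hmemV v
    have : ℓV (g • v) ≤ ℓ (g * h) :=
      Nat.sInf_le ⟨g * h, by rw [hrep_smul, mul_smul, hh], rfl⟩
    calc ℓV (g • v) ≤ ℓ (g * h) := this
      _ ≤ ℓ g + ℓ h := hsub g h
      _ = ℓ g + ℓV v := by rw [hhl]
  have hproperV : ∀ n : ℕ, {v : V | ℓV v ≤ n}.Finite := by
    intro n
    have : {v : V | ℓV v ≤ n} ⊆ (fun p : G × V => p.1 • p.2) ''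
        ({g | ℓ g ≤ n} ×ˢ Set.range (fun q : Quotient (MulAction.orbitRel G V) => q.out)) := by
      intro v hv
      obtain ⟨g, hg, hgl⟩ := hmemV v
      exact ⟨(g, rep v), ⟨by show ℓ g ≤ n; rw [hgl]; exact hv, ⟨_, rfl⟩⟩, hg⟩
    exact (((hproper n).prod (Set.finite_range _)).image _).subset this
  refine ⟨fun g => (ℓ g : ℝ), fun v => (ℓV v : ℝ), fun g => Nat.cast_nonneg _,
    fun v => Nat.cast_nonneg _, ?_, ?_, ?_⟩
  · intro g g'
    show (ℓ (g * g') : ℝ) ≤ (ℓ g : ℝ) + (ℓ g' : ℝ)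
    exact_mod_cast hsub g g'
  · intro g v
    show (ℓV (g • v) : ℝ) ≤ (ℓ g : ℝ) + (ℓV v : ℝ)
    exact_mod_cast hcompat g v
  · intro n
    constructor
    · have : {g : G | (ℓ g : ℝ) ≤ n} = {g | ℓ g ≤ n} := by
        ext g; simp [Nat.cast_le]
      rw [this]; exact hproper n
    · have : {v : V | (ℓV v : ℝ) ≤ n} = {v | ℓV v ≤ n} := by
        ext v; simp [Nat.cast_le]
      rw [this]; exact hproperV n
end

section
/- In the setting of the function m : H_Γ ⋊ G → ℓ¹(VΓ), for any z = (h, g) ∈ H_Γ ⋊ G and any k ∈ G, one has ‖m(kz) − k·m(z)‖₁ ≤ |k|_G · |supp(h)| and ‖m(zk) − m(z)‖₁ ≤ |k|_G · |supp(h)|, where k·μ denotes the pushforward of μ ∈ ℓ¹(VΓ) under the action of k on VΓ. -/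
namespace GWP

variable {V : Type*}

def GraphProduct (E : V → V → Prop) (H : V → Type*) [∀ v, Group (H v)] : Type _ :=
  Monoid.CoprodI H ⧸ Subgroup.normalClosure
    {x : Monoid.CoprodI H | ∃ (v w : V) (a : H v) (b : H w), E v w ∧
      x = Monoid.CoprodI.of a * Monoid.CoprodI.of b *
          (Monoid.CoprodI.of a)⁻¹ * (Monoid.CoprodI.of b)⁻¹}

instance (E : V → V → Prop) (H : V → Type*) [∀ v, Group (H v)] :
    Group (GraphProduct E H) :=
  QuotientGroup.Quotient.group _

def GraphProduct.of (E : V → V → Prop) (H : V → Type*) [∀ v, Group (H v)] (v : V) :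
    H v →* GraphProduct E H :=
  (QuotientGroup.mk' _).comp Monoid.CoprodI.of

/-- `l` is a presentation of `g` as a product of nontrivial syllables. -/
def GraphProduct.IsWord (E : V → V → Prop) (H : V → Type*) [∀ v, Group (H v)]
    (g : GraphProduct E H) (l : List (Σ v, H v)) : Prop :=
  (∀ s ∈ l, s.2 ≠ 1) ∧ g = (l.map (fun s => GraphProduct.of E H s.1 s.2)).prod

/-- Syllable length: the minimal length of a presentation. -/
noncomputable def GraphProduct.norm (E : V → V → Prop) (H : V → Type*) [∀ v, Group (H v)]
    (g : GraphProduct E H) : ℕ :=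
  sInf {n | ∃ l, GraphProduct.IsWord E H g l ∧ l.length = n}

def GraphProduct.IsNormalForm (E : V → V → Prop) (H : V → Type*) [∀ v, Group (H v)]
    (g : GraphProduct E H) (l : List (Σ v, H v)) : Prop :=
  GraphProduct.IsWord E H g l ∧ l.length = GraphProduct.norm E H g

def GraphProduct.supp (E : V → V → Prop) (H : V → Type*) [∀ v, Group (H v)]
    (g : GraphProduct E H) : Set V :=
  {v | ∃ l, GraphProduct.IsNormalForm E H g l ∧ v ∈ l.map Sigma.fst}

def Irreducible (E : V → V → Prop) (l : List V) : Prop :=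
  ∀ i j : Fin l.length, i < j → l.get i = l.get j →
    ∃ k : Fin l.length, i < k ∧ k < j ∧ ¬ E (l.get i) (l.get k)

end GWP

namespace GWP

variable {V : Type*} {H : Type*} [Group H] {G : Type*} [Group G] [MulAction G V]

/-- The value of `m((h,g)) = Σ_{v ∈ supp h} min{|v|_Γ, |g⁻¹v|_Γ} δ_v + Σ_i |h_i|_H δ_{v_i}`,
computed from a chosen presentation `l` of `h`. -/
noncomputable def mFun [DecidableEq V] (ℓH : H → ℝ) (ℓV : V → ℝ)
    (l : List (Σ _ : V, H)) (g : G) : V → ℝ :=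
  fun v =>
    (if v ∈ l.map Sigma.fst then min (ℓV v) (ℓV (g⁻¹ • v)) else 0) +
    (l.map (fun s => if s.1 = v then ℓH s.2 else 0)).sum

/-- The `ℓ¹`-norm of a (finitely supported) function on `VΓ`. -/
noncomputable def norm1 (f : V → ℝ) : ℝ := ∑' v, |f v|

end GWP


namespace GWP

lemma norm1_le_aux {V : Type*} (f : V → ℝ) (T : Finset V) (C : ℝ) (hC : 0 ≤ C)
    (h0 : ∀ v, v ∉ T → f v = 0) (hb : ∀ v, |f v| ≤ C) :
    norm1 f ≤ C * T.card := by
  rw [norm1, tsum_eq_sum (s := T) (fun v hv => by rw [h0 v hv, abs_zero])]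
  calc ∑ v ∈ T, |f v| ≤ ∑ _v ∈ T, C := Finset.sum_le_sum fun v _ => hb v
    _ = C * T.card := by rw [Finset.sum_const, nsmul_eq_mul, mul_comm]

lemma abs_ℓV_sub {G : Type*} [Group G] {V : Type*} [MulAction G V]
    {ℓG : G → ℝ} {ℓV : V → ℝ} (hℓGinv : ∀ g : G, ℓG g⁻¹ = ℓG g)
    (hℓV : ∀ (g : G) (v : V), ℓV (g • v) ≤ ℓG g + ℓV v) (k : G) (u : V) :
    |ℓV (k • u) - ℓV u| ≤ ℓG k := by
  rw [abs_sub_le_iff]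
  constructor
  · have := hℓV k u; linarith
  · have := hℓV k⁻¹ (k • u)
    rw [inv_smul_smul, hℓGinv] at this; linarith

end GWP

open GWP GWP.GraphProduct in
/-- For `z = (h,g) ∈ H_Γ ⋊ G` and `k ∈ G`:
`‖m(kz) − k·m(z)‖₁ ≤ |k|_G · |supp h|` and `‖m(zk) − m(z)‖₁ ≤ |k|_G · |supp h|`.
Here `kz = (σ_k(h), kg)`, whose normal form is the `k`-translate of that of `h`,
`zk = (h, gk)`, and `k·μ` is the pushforward of `μ` under `k`. -/
theorem stmt13 {V : Type*} [DecidableEq V] (E : V → V → Prop)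
    {H : Type*} [Group H] {G : Type*} [Group G] [MulAction G V]
    (ℓG : G → ℝ) (ℓH : H → ℝ) (ℓV : V → ℝ)
    (hℓG0 : ∀ g : G, 0 ≤ ℓG g) (hℓGinv : ∀ g : G, ℓG g⁻¹ = ℓG g)
    (hℓGsub : ∀ g g' : G, ℓG (g * g') ≤ ℓG g + ℓG g')
    (hℓV : ∀ (g : G) (v : V), ℓV (g • v) ≤ ℓG g + ℓV v)
    (h : GraphProduct E (fun _ : V => H)) (g k : G)
    (l : List (Σ _ : V, H)) (hl : IsNormalForm E (fun _ : V => H) h l) :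
    norm1 (fun w =>
        mFun ℓH ℓV (l.map (fun s => (⟨k • s.1, s.2⟩ : Σ _ : V, H))) (k * g) w -
          mFun ℓH ℓV l g (k⁻¹ • w))
      ≤ ℓG k * (l.map Sigma.fst).toFinset.card ∧
    norm1 (fun w => mFun ℓH ℓV l (g * k) w - mFun ℓH ℓV l g w)
      ≤ ℓG k * (l.map Sigma.fst).toFinset.card := by
  obtain ⟨⟨hne, -⟩, -⟩ := hl
  constructor
  · -- first estimate
    refine le_trans (norm1_le_aux _ ((l.map Sigma.fst).toFinset.image (k • ·)) (ℓG k)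
      (hℓG0 k) ?_ ?_) ?_
    · intro w hw
      have hmem : w ∉ (l.map (fun s : Σ _ : V, H => k • s.1)) := by
        intro hc
        apply hw
        rw [Finset.mem_image]
        rcases List.mem_map.1 hc with ⟨s, hs, hsw⟩
        exact ⟨s.1, by simp [List.mem_toFinset, List.mem_map]; exact ⟨s.2, hs⟩, hsw⟩
      have hmem' : k⁻¹ • w ∉ l.map Sigma.fst := by
        intro hc
        rcases List.mem_map.1 hc with ⟨s, hs, hsw⟩
        exact hmem (List.mem_map.2 ⟨s, hs, by rw [hsw, smul_inv_smul]⟩)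
      simp only [mFun, List.map_map, Function.comp_def]
      rw [if_neg (fun hc => hmem (by simpa using hc)), if_neg hmem']
      have h2 : ∀ s ∈ l, ((fun s : Σ _ : V, H =>
          if k • s.1 = w then ℓH s.2 else 0) s)
          = ((fun s : Σ _ : V, H => if s.1 = k⁻¹ • w then ℓH s.2 else 0) s) := by
        intro s _
        simp only [eq_inv_smul_iff]
      rw [List.map_congr_left h2]
      ring
    · intro w
      simp only [mFun, List.map_map, Function.comp_def]
      have h2 : ∀ s ∈ l, ((fun s : Σ _ : V, H =>
          if k • s.1 = w then ℓH s.2 else 0) s)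
          = ((fun s : Σ _ : V, H => if s.1 = k⁻¹ • w then ℓH s.2 else 0) s) := by
        intro s _
        simp only [eq_inv_smul_iff]
      rw [List.map_congr_left h2]
      have hmemiff : (w ∈ l.map fun s : Σ _ : V, H => k • s.1)
          ↔ k⁻¹ • w ∈ l.map Sigma.fst := by
        simp only [List.mem_map]
        constructor
        · rintro ⟨s, hs, hsw⟩; exact ⟨s, hs, by rw [← hsw, inv_smul_smul]⟩
        · rintro ⟨s, hs, hsw⟩; exact ⟨s, hs, by rw [hsw, smul_inv_smul]⟩
      by_cases hP : k⁻¹ • w ∈ l.map Sigma.fst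
      · rw [if_pos (hmemiff.2 hP), if_pos hP]
        have hc : ℓV ((k * g)⁻¹ • w) = ℓV (g⁻¹ • k⁻¹ • w) := by
          rw [mul_inv_rev, mul_smul]
        rw [hc]
        have : min (ℓV w) (ℓV (g⁻¹ • k⁻¹ • w)) + (l.map fun s => if s.1 = k⁻¹ • w then ℓH s.2 else 0).sum -
            (min (ℓV (k⁻¹ • w)) (ℓV (g⁻¹ • k⁻¹ • w)) + (l.map fun s => if s.1 = k⁻¹ • w then ℓH s.2 else 0).sum)
            = min (ℓV w) (ℓV (g⁻¹ • k⁻¹ • w)) - min (ℓV (k⁻¹ • w)) (ℓV (g⁻¹ • k⁻¹ • w)) := by ring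
        rw [this]
        refine le_trans (abs_min_sub_min_le_max _ _ _ _) ?_
        have h3 : |ℓV w - ℓV (k⁻¹ • w)| ≤ ℓG k := by
          have := abs_ℓV_sub hℓGinv hℓV k (k⁻¹ • w)
          rwa [smul_inv_smul] at this
        simp only [sub_self, abs_zero]
        exact max_le h3 (hℓG0 k)
      · rw [if_neg (fun hc => hP (hmemiff.1 hc)), if_neg hP]
        simp [hℓG0 k]
    · exact mul_le_mul_of_nonneg_left (by exact_mod_cast Finset.card_image_le) (hℓG0 k)
  · refine norm1_le_aux _ (l.map Sigma.fst).toFinset (ℓG k) (hℓG0 k) ?_ ?_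
    · intro w hw
      have hP : w ∉ l.map Sigma.fst := fun hc => hw (List.mem_toFinset.2 hc)
      simp only [mFun, if_neg hP]
      ring
    · intro w
      simp only [mFun]
      by_cases hP : w ∈ l.map Sigma.fst
      · rw [if_pos hP, if_pos hP]
        have hc : ℓV ((g * k)⁻¹ • w) = ℓV (k⁻¹ • g⁻¹ • w) := by
          rw [mul_inv_rev, mul_smul]
        have heq : min (ℓV w) (ℓV ((g * k)⁻¹ • w)) + (l.map fun s => if s.1 = w then ℓH s.2 else 0).sum -
            (min (ℓV w) (ℓV (g⁻¹ • w)) + (l.map fun s => if s.1 = w then ℓH s.2 else 0).sum)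
            = min (ℓV w) (ℓV (k⁻¹ • g⁻¹ • w)) - min (ℓV w) (ℓV (g⁻¹ • w)) := by
          rw [hc]; ring
        rw [heq]
        refine le_trans (abs_min_sub_min_le_max _ _ _ _) ?_
        have h3 : |ℓV (k⁻¹ • g⁻¹ • w) - ℓV (g⁻¹ • w)| ≤ ℓG k := by
          have := abs_ℓV_sub hℓGinv hℓV k⁻¹ (g⁻¹ • w)
          rwa [hℓGinv] at this
        simp only [sub_self, abs_zero]
        exact max_le (hℓG0 k) h3
      · rw [if_neg hP, if_neg hP]
        simp [hℓG0 k]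
end

section
/- Let C > 0 and suppose z = (h, g) ∈ H_Γ ⋊ G satisfies |z|_f ≤ C·|supp(h)|, where |z|_f = ‖m(z)‖₁. Then |supp(h)| ≤ 4·|B(Γ, 2C)|, where B(Γ, R) = {v ∈ VΓ : |v|_Γ ≤ R}. -/
open GWP GWP.GraphProduct in
/-- If `z = (h,g)` satisfies `|z|_f ≤ C · |supp h|`, then
`|supp h| ≤ 4 · |B(Γ, 2C)|` where `B(Γ,R) = {v : |v|_Γ ≤ R}`. -/
theorem stmt14 {V : Type*} [DecidableEq V] (E : V → V → Prop)
    {H : Type*} [Group H] {G : Type*} [Group G] [MulAction G V]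
    (ℓH : H → ℝ) (ℓV : V → ℝ)
    (hℓH0 : ∀ x : H, 0 ≤ ℓH x) (hℓV0 : ∀ v : V, 0 ≤ ℓV v)
    (hball : ∀ R : ℝ, {v : V | ℓV v ≤ R}.Finite)
    (C : ℝ) (hC : 0 < C)
    (h : GraphProduct E (fun _ : V => H)) (g : G)
    (l : List (Σ _ : V, H)) (hl : IsNormalForm E (fun _ : V => H) h l)
    (hle : norm1 (mFun ℓH ℓV l g : V → ℝ)
      ≤ C * (l.map Sigma.fst).toFinset.card) :
    ((l.map Sigma.fst).toFinset.card : ℝ)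
      ≤ 4 * ({v : V | ℓV v ≤ 2 * C}.ncard : ℝ) := by

  classical
  set f := (mFun ℓH ℓV l g : V → ℝ) with hf
  set S := (l.map Sigma.fst).toFinset with hS
  have hBfin := hball (2*C)
  set Bfin := hBfin.toFinset with hB
  have hncard : ({v : V | ℓV v ≤ 2 * C}.ncard : ℝ) = (Bfin.card : ℝ) := by
    rw [Set.ncard_eq_toFinset_card _ hBfin]
  -- f vanishes off S
  have hzero : ∀ v, v ∉ S → f v = 0 := by
    intro v hv
    have hv' : v ∉ l.map Sigma.fst := by
      simpa [hS, List.mem_toFinset] using hv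
    simp only [hf, mFun, if_neg hv']
    rw [zero_add]
    apply List.sum_eq_zero
    intro x hx
    simp only [List.mem_map] at hx
    obtain ⟨s, hs, rfl⟩ := hx
    have : s.1 ≠ v := fun hvv => hv' (hvv ▸ List.mem_map_of_mem (f := Sigma.fst) hs)
    simp [this]
  -- f nonneg
  have hfnonneg : ∀ v, 0 ≤ f v := by
    intro v
    apply add_nonneg
    · split
      · exact le_min (hℓV0 v) (hℓV0 _)
      · exact le_rfl
    · apply List.sum_nonneg
      intro x hx
      simp only [List.mem_map] at hx
      obtain ⟨s, hs, rfl⟩ := hx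
      split <;> [exact hℓH0 _; exact le_rfl]
  have hnorm : norm1 f = ∑ v ∈ S, |f v| :=
    tsum_eq_sum (fun v hv => by rw [hzero v hv, abs_zero])
  -- subsets
  set T := S.filter (fun v => 2*C < ℓV v ∧ 2*C < ℓV (g⁻¹ • v)) with hT
  set A1 := S.filter (fun v => ℓV v ≤ 2*C) with hA1
  set A2 := S.filter (fun v => ℓV (g⁻¹ • v) ≤ 2*C) with hA2
  have hScard : S.card ≤ T.card + A1.card + A2.card := by
    have hsub : S ⊆ T ∪ A1 ∪ A2 := by
      intro v hv
      simp only [Finset.mem_union, hT, hA1, hA2, Finset.mem_filter]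
      rcases le_or_gt (ℓV v) (2*C) with h1 | h1
      · exact Or.inl (Or.inr ⟨hv, h1⟩)
      · rcases le_or_gt (ℓV (g⁻¹ • v)) (2*C) with h2 | h2
        · exact Or.inr ⟨hv, h2⟩
        · exact Or.inl (Or.inl ⟨hv, h1, h2⟩)
    calc S.card ≤ (T ∪ A1 ∪ A2).card := Finset.card_le_card hsub
      _ ≤ (T ∪ A1).card + A2.card := Finset.card_union_le _ _
      _ ≤ T.card + A1.card + A2.card := by
          exact Nat.add_le_add_right (Finset.card_union_le _ _) _
  have hA1card : A1.card ≤ Bfin.card := by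
    apply Finset.card_le_card
    intro v hv
    simp only [hA1, Finset.mem_filter] at hv
    rw [hB, Set.Finite.mem_toFinset]
    exact hv.2
  have hA2card : A2.card ≤ Bfin.card := by
    apply Finset.card_le_card_of_injOn (fun v => g⁻¹ • v)
    · intro v hv
      simp only [hA2, Finset.mem_coe, Finset.mem_filter] at hv
      rw [hB, Finset.mem_coe, Set.Finite.mem_toFinset]
      exact hv.2
    · intro a _ b _ hab
      exact smul_left_cancel g⁻¹ hab
  -- lower bound on norm1
  have hTbound : 2*C * T.card ≤ norm1 f := by
    rw [hnorm]
    calc 2*C * T.card = ∑ _v ∈ T, 2*C := by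
          rw [Finset.sum_const, nsmul_eq_mul, mul_comm]
      _ ≤ ∑ v ∈ T, |f v| := by
          apply Finset.sum_le_sum
          intro v hv
          simp only [hT, Finset.mem_filter] at hv
          obtain ⟨hvS, h1, h2⟩ := hv
          rw [abs_of_nonneg (hfnonneg v)]
          have hvmem : v ∈ l.map Sigma.fst := by
            rw [hS, List.mem_toFinset] at hvS; exact hvS
          have : 2*C ≤ min (ℓV v) (ℓV (g⁻¹ • v)) := le_min h1.le h2.le
          calc 2*C ≤ min (ℓV v) (ℓV (g⁻¹ • v)) := this
            _ ≤ f v := by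
                simp only [hf, mFun, if_pos hvmem]
                apply le_add_of_nonneg_right
                apply List.sum_nonneg
                intro x hx
                simp only [List.mem_map] at hx
                obtain ⟨s, _, rfl⟩ := hx
                split <;> [exact hℓH0 _; exact le_rfl]
      _ ≤ ∑ v ∈ S, |f v| := by
          apply Finset.sum_le_sum_of_subset_of_nonneg (Finset.filter_subset _ _)
          intro v _ _
          exact abs_nonneg _
  -- combine
  rw [hncard]
  by_contra hcon
  push_neg at hcon
  have hcards : (S.card : ℝ) ≤ (T.card : ℝ) + (A1.card : ℝ) + (A2.card : ℝ) := by
    exact_mod_cast hScard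
  have h1 : (A1.card : ℝ) ≤ (Bfin.card : ℝ) := by exact_mod_cast hA1card
  have h2 : (A2.card : ℝ) ≤ (Bfin.card : ℝ) := by exact_mod_cast hA2card
  have hchain : 2*C * ((S.card : ℝ) - 2 * Bfin.card) ≤ C * S.card := by
    calc 2*C * ((S.card : ℝ) - 2 * Bfin.card) ≤ 2*C * T.card := by
          apply mul_le_mul_of_nonneg_left _ (by linarith)
          linarith
      _ ≤ norm1 f := hTbound
      _ ≤ C * S.card := hle
  nlinarith [hcon, hchain, hC]
end
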